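/- arXiv:1803.07754 — 2 statements merged into one kernel-verified Lean document; each statement's English description precedes it below -/
import Mathlib

section
/- Let X, A, Y be C^r manifolds (r ≥ 1), Z a C^r submanifold of Y, U ⊆ X × A open, F : U → Y a C¹ map, and suppose F is transverse to Z. If a ∈ A is a regular value of the restriction π₂|_{F⁻¹(Z)} : F⁻¹(Z) → A (where F⁻¹(Z) is a C^r submanifold of U), then the slice map F_a is transverse to Z. -/
open Set Submodule Module MeasureTheory Function Classical

noncomputable section

variable {Y : Type*} [NormedAddCommGroup Y] [NormedSpace ℝ Y]

/-- The tangent space of a subset `Z` at a point `y`, as the span of the tangent cone. -/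
def tangentAt (Z : Set Y) (y : Y) : Submodule ℝ Y :=
  Submodule.span ℝ (tangentConeAt ℝ Z y)

/-- `Z` is an embedded `C^r` submanifold of dimension `q`: locally the regular zero set of a
`C^r` submersion with values in `ℝ^{dim Y - q}`. -/
def IsSubmanifold (r : ℕ∞) (q : ℕ) (Z : Set Y) : Prop :=
  ∀ z ∈ Z, ∃ s : Set Y, IsOpen s ∧ z ∈ s ∧
    ∃ f : Y → (Fin (finrank ℝ Y - q) → ℝ), ContDiffOn ℝ r f s ∧
      Z ∩ s = {y | y ∈ s ∧ f y = 0} ∧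
      ∀ y ∈ Z ∩ s, Surjective (fderivWithin ℝ f s y)

variable {X : Type*} [NormedAddCommGroup X] [NormedSpace ℝ X]

/-- The transversality defect `δ(f, x, Z)` of a map `f`, defined on `s`, at `x`. -/
def delta (f : X → Y) (s : Set X) (x : X) (Z : Set Y) : ℕ :=
  if f x ∈ Z then
    finrank ℝ Y - finrank ℝ ↥(LinearMap.range (fderivWithin ℝ f s x : X →ₗ[ℝ] Y) ⊔ tangentAt Z (f x))
  else 0

/-- `δ(f, Z)`, the supremum of the defects. -/
def deltaSup (f : X → Y) (s : Set X) (Z : Set Y) : ℕ :=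
  sSup {n | ∃ x ∈ s, n = delta f s x Z}

/-- `f`, defined on `s`, is transverse to `Z`. -/
def Transverse (f : X → Y) (s : Set X) (Z : Set Y) : Prop :=
  ∀ x ∈ s, f x ∈ Z → LinearMap.range (fderivWithin ℝ f s x : X →ₗ[ℝ] Y) ⊔ tangentAt Z (f x) = ⊤

end


/-- If `F` is transverse to `Z` and `a` is a regular value of the projection restricted to
`F⁻¹(Z)`, then the slice map `F_a` is transverse to `Z`. -/
theorem stmt6 {X A Y : Type*} [NormedAddCommGroup X] [NormedSpace ℝ X] [FiniteDimensional ℝ X]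
    [NormedAddCommGroup A] [NormedSpace ℝ A] [FiniteDimensional ℝ A]
    [NormedAddCommGroup Y] [NormedSpace ℝ Y] [FiniteDimensional ℝ Y]
    (r : ℕ∞) (hr : 1 ≤ r) (q : ℕ) (Z : Set Y) (hZ : IsSubmanifold r q Z)
    (U : Set (X × A)) (hU : IsOpen U) (F : X × A → Y) (hF : ContDiffOn ℝ 1 F U)
    (hT : Transverse F U Z) (a : A)
    (hreg : ∀ p ∈ {p | p ∈ U ∧ F p ∈ Z}, p.2 = a →
      Submodule.map (LinearMap.snd ℝ X A) (tangentAt {p | p ∈ U ∧ F p ∈ Z} p) = ⊤) :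
    Transverse (fun x => F (x, a)) {x | (x, a) ∈ U} Z := by
  intro x hx hxZ
  set p : X × A := (x, a) with hp
  have hpU : p ∈ U := hx
  set M : Set (X × A) := {p | p ∈ U ∧ F p ∈ Z} with hM
  have hpM : p ∈ M := ⟨hpU, hxZ⟩
  -- F is differentiable at p
  have hdF : HasFDerivAt F (fderiv ℝ F p) p := by
    have := (hF.contDiffAt (hU.mem_nhds hpU)).differentiableAt one_ne_zero
    exact this.hasFDerivAt
  set dF := fderiv ℝ F p with hdFdef
  -- the slice set is open
  have hsopen : IsOpen {x : X | (x, a) ∈ U} :=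
    hU.preimage (Continuous.prodMk_left a)
  -- derivative of the slice map
  have hg : HasFDerivAt (fun x => F (x, a)) (dF.comp (ContinuousLinearMap.inl ℝ X A)) x :=
    hdF.comp x (hasFDerivAt_prodMk_left x a)
  have hgW : fderivWithin ℝ (fun x => F (x, a)) {x : X | (x, a) ∈ U} x
      = dF.comp (ContinuousLinearMap.inl ℝ X A) := by
    rw [fderivWithin_of_isOpen hsopen hx, hg.fderiv]
  -- transversality of F at p
  have hTp := hT p hpU hxZ
  rw [fderivWithin_of_isOpen hU hpU] at hTp
  -- dF maps the tangent space of M into the tangent space of Z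
  have hmap : ∀ v ∈ tangentAt M p, dF v ∈ tangentAt Z (F p) := by
    intro v hv
    have hmt : Set.MapsTo dF (tangentConeAt ℝ M p) (tangentConeAt ℝ (F '' M) (F p)) :=
      (hdF.hasFDerivWithinAt (s := M)).mapsTo_tangent_cone
    have hsub : tangentConeAt ℝ (F '' M) (F p) ⊆ tangentConeAt ℝ Z (F p) :=
      tangentConeAt_mono (by rintro _ ⟨q, hq, rfl⟩; exact hq.2)
    have : dF v ∈ Submodule.map (dF : X × A →ₗ[ℝ] Y) (tangentAt M p) :=
      Submodule.mem_map_of_mem hv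
    rw [tangentAt, Submodule.map_span] at this
    refine Submodule.span_mono ?_ this
    rintro _ ⟨w, hw, rfl⟩
    exact hsub (hmt hw)
  -- main argument
  rw [eq_top_iff]
  rintro y -
  have hy : y ∈ LinearMap.range (dF : X × A →ₗ[ℝ] Y) ⊔ tangentAt Z (F p) := by rw [hTp]; exact Submodule.mem_top
  obtain ⟨-, ⟨w, rfl⟩, t, ht, rfl⟩ := Submodule.mem_sup.1 hy
  -- use regularity to correct the A-component of w
  have hsnd := hreg p hpM rfl
  have : (w.2 : A) ∈ Submodule.map (LinearMap.snd ℝ X A) (tangentAt M p) :=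
    by rw [hsnd]; exact Submodule.mem_top
  obtain ⟨v, hv, hv2⟩ := this
  refine Submodule.mem_sup.2 ⟨dF (w - v), ?_, dF v + t, ?_, ?_⟩
  · refine ⟨w.1 - v.1, ?_⟩
    rw [hgW]
    have : w - v = ((w.1 - v.1 : X), (0 : A)) := by
      have hv2' : v.2 = w.2 := hv2
      ext <;> simp [hv2']
    simp [this]
  · exact add_mem (hmap v hv) ht
  · have : dF (w - v) + (dF v + t) = dF w + t := by
      rw [map_sub]; abel
    simpa using this
end

section
/- Let F : ℝ × ℝ → ℝ³ be F(x,a) = (x, a, 0), and Z = {(x,0,0) : 0 < x < 1} ⊆ ℝ³. Then: (i) δ(F, (x,a), Z) = 1 and δ(F_a, x, Z) = 2 for all (x,a) ∈ (0,1) × {0}, and both are 0 elsewhere; (ii) W(F,Z) = ∅; (iii) the set Σ = {(x,a) : δ(F, (x,a), Z) = δ(F, Z)} equals (0,1) × {0} and is not closed in ℝ², even though δ(F_a,x,Z) = 0 or δ(F,(x,a),Z) < δ(F_a,x,Z) everywhere and δ(F,Z) = 1 > 0. -/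
open Set Submodule Module MeasureTheory Function Classical

section BruceKirkAux

open Set Submodule Module Function Filter Topology Classical

noncomputable section

/-- First standard basis vector of `ℝ³`. -/
def bkE0 : Fin 3 → ℝ := ![1, 0, 0]

/-- The open unit segment of the first axis. -/
def bkZ : Set (Fin 3 → ℝ) := {y | 0 < y 0 ∧ y 0 < 1 ∧ y 1 = 0 ∧ y 2 = 0}

lemma bk_mem_span_e0 {v : Fin 3 → ℝ} (h1 : v 1 = 0) (h2 : v 2 = 0) :
    v ∈ span ℝ {bkE0} := by
  have : v = v 0 • bkE0 := by
    funext i; fin_cases i <;> simp [bkE0, h1, h2]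
  rw [this]
  exact smul_mem _ _ (subset_span rfl)

lemma bk_e0_mem_cone {y : Fin 3 → ℝ} (hy : y ∈ bkZ) : bkE0 ∈ tangentConeAt ℝ bkZ y := by
  obtain ⟨h0, h1, hy1, hy2⟩ := hy
  refine mem_tangentConeAt_iff_exists_seq_norm_tendsto_atTop.2
    ⟨fun n => (n : ℝ) + 1, fun n => (((n:ℝ)+1)⁻¹) • bkE0, ?_, ?_, ?_⟩
  swap
  · have := tendsto_one_div_add_atTop_nhds_zero_nat.eventually
      (gt_mem_nhds (by linarith : (0:ℝ) < 1 - y 0))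
    filter_upwards [this] with n hn
    rw [one_div] at hn
    have hpos : (0:ℝ) < ((n:ℝ)+1)⁻¹ := by positivity
    refine ⟨?_, ?_, ?_, ?_⟩ <;> simp [bkE0, hy1, hy2] <;> linarith
  · have h : Tendsto (fun n : ℕ => (n:ℝ) + 1) atTop atTop :=
      tendsto_atTop_add_const_right _ 1 tendsto_natCast_atTop_atTop
    exact h.congr fun n => (Real.norm_of_nonneg (by positivity)).symm
  · refine tendsto_const_nhds.congr fun n => ?_
    rw [smul_smul, mul_inv_cancel₀ (by positivity)]
    exact (one_smul _ _).symm

lemma bk_cone_subset {y : Fin 3 → ℝ} (hy : y ∈ bkZ) :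
    tangentConeAt ℝ bkZ y ⊆ span ℝ {bkE0} := by
  rintro v hv
  obtain ⟨c, d, hc, hmem, hcd⟩ := mem_tangentConeAt_iff_exists_seq_norm_tendsto_atTop.1 hv
  have key : ∀ i : Fin 3, i ≠ 0 → v i = 0 := by
    intro i hi
    refine tendsto_nhds_unique (hcd.apply_nhds i) (tendsto_const_nhds.congr' ?_)
    filter_upwards [hmem] with n hn
    have hdi : d n i = 0 := by
      have h1 : (y + d n) i = 0 := by
        fin_cases i
        · exact absurd rfl hi
        · exact hn.2.2.1
        · exact hn.2.2.2
      have h2 : y i = 0 := by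
        fin_cases i
        · exact absurd rfl hi
        · exact hy.2.2.1
        · exact hy.2.2.2
      simpa [h2] using h1
    simp [hdi]
  exact bk_mem_span_e0 (key 1 (by decide)) (key 2 (by decide))

lemma bk_tangentAt_eq {y : Fin 3 → ℝ} (hy : y ∈ bkZ) :
    span ℝ (tangentConeAt ℝ bkZ y) = span ℝ {bkE0} :=
  le_antisymm (span_le.2 (bk_cone_subset hy))
    (span_le.2 (Set.singleton_subset_iff.2 (subset_span (bk_e0_mem_cone hy))))

/-- The derivative of `F`. -/
def bkL : (ℝ × ℝ) →L[ℝ] (Fin 3 → ℝ) :=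
  ContinuousLinearMap.pi ![ContinuousLinearMap.fst ℝ ℝ ℝ, ContinuousLinearMap.snd ℝ ℝ ℝ, 0]

/-- The derivative of the slice map. -/
def bkL1 : ℝ →L[ℝ] (Fin 3 → ℝ) :=
  ContinuousLinearMap.pi ![ContinuousLinearMap.id ℝ ℝ, 0, 0]

lemma bkL_coe : ⇑bkL = fun p : ℝ × ℝ => ![p.1, p.2, 0] := by
  funext p; funext i; fin_cases i <;> simp [bkL]

lemma bk_fderiv_F (p : ℝ × ℝ) :
    fderivWithin ℝ (fun p : ℝ × ℝ => ![p.1, p.2, 0]) Set.univ p = bkL := by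
  rw [fderivWithin_univ, ← bkL_coe, bkL.fderiv]

lemma bk_fderiv_slice (a x : ℝ) :
    fderivWithin ℝ (fun x : ℝ => ![x, a, (0:ℝ)]) Set.univ x = bkL1 := by
  rw [fderivWithin_univ]
  have h : (fun x : ℝ => ![x, a, (0:ℝ)]) = fun x => ![0, a, 0] + bkL1 x := by
    funext x; funext i; fin_cases i <;> simp [bkL1]
  rw [h]
  exact ((bkL1.hasFDerivAt).const_add _).fderiv

lemma bk_range_L_rank : finrank ℝ ↥(LinearMap.range (bkL : (ℝ × ℝ) →ₗ[ℝ] (Fin 3 → ℝ))) = 2 := by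
  have hinj : Injective bkL := by
    intro p q h
    have h0 := congrFun h 0
    have h1 := congrFun h 1
    simp [bkL] at h0 h1
    exact Prod.ext h0 h1
  have := LinearMap.finrank_range_of_inj (f := (bkL : (ℝ × ℝ) →ₗ[ℝ] (Fin 3 → ℝ))) hinj
  simpa using this

lemma bk_e0_mem_range_L : bkE0 ∈ LinearMap.range (bkL : (ℝ × ℝ) →ₗ[ℝ] (Fin 3 → ℝ)) := by
  refine ⟨(1, 0), ?_⟩
  funext i; fin_cases i <;> simp [bkL, bkE0]

lemma bk_range_L1 : LinearMap.range (bkL1 : ℝ →ₗ[ℝ] (Fin 3 → ℝ)) = span ℝ {bkE0} := by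
  apply le_antisymm
  · rintro v ⟨x, rfl⟩
    have : (bkL1 : ℝ →ₗ[ℝ] (Fin 3 → ℝ)) x = x • bkE0 := by funext i; fin_cases i <;> simp [bkL1, bkE0]
    rw [this]; exact smul_mem _ _ (subset_span rfl)
  · rw [span_le, Set.singleton_subset_iff]
    exact ⟨1, by funext i; fin_cases i <;> simp [bkL1, bkE0]⟩

lemma bk_rank_span_e0 : finrank ℝ ↥(span ℝ {bkE0}) = 1 :=
  finrank_span_singleton (by intro h; have := congrFun h 0; simp [bkE0] at this)

lemma bk_finrank3 : finrank ℝ (Fin 3 → ℝ) = 3 := by simp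

lemma bk_memZ_iff (p : ℝ × ℝ) :
    ![p.1, p.2, (0:ℝ)] ∈ bkZ ↔ p ∈ Set.Ioo (0:ℝ) 1 ×ˢ ({0} : Set ℝ) := by
  constructor
  · rintro ⟨h0, h1, h2, -⟩
    exact ⟨⟨by simpa using h0, by simpa using h1⟩, by simpa using h2⟩
  · rintro ⟨⟨h0, h1⟩, h2⟩
    exact ⟨by simpa using h0, by simpa using h1, by simpa using h2, by simp⟩

lemma bk_deltaF_in {p : ℝ × ℝ} (hp : p ∈ Set.Ioo (0:ℝ) 1 ×ˢ ({0} : Set ℝ)) :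
    delta (fun p : ℝ × ℝ => ![p.1, p.2, 0]) Set.univ p bkZ = 1 := by
  have hmem : ![p.1, p.2, (0:ℝ)] ∈ bkZ := (bk_memZ_iff p).2 hp
  have hsup : LinearMap.range (bkL : (ℝ × ℝ) →ₗ[ℝ] (Fin 3 → ℝ)) ⊔ span ℝ {bkE0} = LinearMap.range (bkL : (ℝ × ℝ) →ₗ[ℝ] (Fin 3 → ℝ)) :=
    sup_eq_left.2 (span_le.2 (Set.singleton_subset_iff.2 bk_e0_mem_range_L))
  have key : LinearMap.range (fderivWithin ℝ (fun p : ℝ × ℝ => ![p.1, p.2, 0]) Set.univ p : (ℝ × ℝ) →ₗ[ℝ] (Fin 3 → ℝ)) ⊔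
      tangentAt bkZ ![p.1, p.2, 0] = LinearMap.range (bkL : (ℝ × ℝ) →ₗ[ℝ] (Fin 3 → ℝ)) := by
    rw [bk_fderiv_F, tangentAt, bk_tangentAt_eq hmem]; exact hsup
  simp only [delta, if_pos hmem, bk_finrank3]
  rw [key, bk_range_L_rank]

lemma bk_deltaSlice_in {p : ℝ × ℝ} (hp : p ∈ Set.Ioo (0:ℝ) 1 ×ˢ ({0} : Set ℝ)) :
    delta (fun x : ℝ => ![x, p.2, 0]) Set.univ p.1 bkZ = 2 := by
  have hmem : ![p.1, p.2, (0:ℝ)] ∈ bkZ := (bk_memZ_iff p).2 hp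
  have key : LinearMap.range (fderivWithin ℝ (fun x : ℝ => ![x, p.2, 0]) Set.univ p.1 : ℝ →ₗ[ℝ] (Fin 3 → ℝ)) ⊔
      tangentAt bkZ ![p.1, p.2, 0] = span ℝ {bkE0} := by
    rw [bk_fderiv_slice, tangentAt, bk_tangentAt_eq hmem, bk_range_L1, sup_idem]
  simp only [delta, if_pos hmem, bk_finrank3]
  rw [key, bk_rank_span_e0]

lemma bk_deltaF_out {p : ℝ × ℝ} (hp : p ∉ Set.Ioo (0:ℝ) 1 ×ˢ ({0} : Set ℝ)) :
    delta (fun p : ℝ × ℝ => ![p.1, p.2, 0]) Set.univ p bkZ = 0 := by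
  have hmem : ![p.1, p.2, (0:ℝ)] ∉ bkZ := fun h => hp ((bk_memZ_iff p).1 h)
  simp only [delta, if_neg hmem]

lemma bk_deltaSlice_out {p : ℝ × ℝ} (hp : p ∉ Set.Ioo (0:ℝ) 1 ×ˢ ({0} : Set ℝ)) :
    delta (fun x : ℝ => ![x, p.2, 0]) Set.univ p.1 bkZ = 0 := by
  have hmem : ![p.1, p.2, (0:ℝ)] ∉ bkZ := fun h => hp ((bk_memZ_iff p).1 h)
  simp only [delta, if_neg hmem]

lemma bk_deltaSup_F : deltaSup (fun p : ℝ × ℝ => ![p.1, p.2, 0]) Set.univ bkZ = 1 := by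
  have hset : {n | ∃ x ∈ (Set.univ : Set (ℝ × ℝ)),
      n = delta (fun p : ℝ × ℝ => ![p.1, p.2, 0]) Set.univ x bkZ} = {0, 1} := by
    ext n
    constructor
    · rintro ⟨x, -, rfl⟩
      by_cases hx : x ∈ Set.Ioo (0:ℝ) 1 ×ˢ ({0} : Set ℝ)
      · right; exact bk_deltaF_in hx
      · left; exact bk_deltaF_out hx
    · rintro (rfl | rfl)
      · exact ⟨(2, 0), trivial, (bk_deltaF_out (by norm_num [Set.mem_prod])).symm⟩
      · exact ⟨(1/2, 0), trivial, (bk_deltaF_in (by norm_num [Set.mem_prod])).symm⟩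
  rw [deltaSup, hset, csSup_pair]
  rfl

lemma bk_not_closed : ¬ IsClosed (Set.Ioo (0:ℝ) 1 ×ˢ ({0} : Set ℝ)) := by
  intro h
  have hu : Tendsto (fun n : ℕ => ((1/((n:ℝ)+2), 0) : ℝ × ℝ)) atTop (𝓝 (0, 0)) := by
    refine Tendsto.prodMk_nhds ?_ tendsto_const_nhds
    have := (tendsto_one_div_add_atTop_nhds_zero_nat (𝕜 := ℝ)).comp (tendsto_add_atTop_nat 1)
    refine this.congr fun n => ?_
    simp only [Function.comp_apply]
    push_cast; ring_nf
  have hmem : ∀ n : ℕ, ((1/((n:ℝ)+2), 0) : ℝ × ℝ) ∈ Set.Ioo (0:ℝ) 1 ×ˢ ({0} : Set ℝ) := by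
    intro n
    refine ⟨⟨by positivity, ?_⟩, rfl⟩
    rw [div_lt_one (by positivity)]
    have := Nat.cast_nonneg (α := ℝ) n
    linarith
  have := h.mem_of_tendsto hu (Filter.Eventually.of_forall hmem)
  exact absurd this.1.1 (by norm_num)

end

end BruceKirkAux


/-- The Bruce–Kirk counterexample: F(x,a) = (x,a,0), Z the open unit segment of the first
axis in ℝ³. The two defects, the emptiness of W(F,Z), and the non-closedness of Σ. -/
theorem stmt8 :
    let F : ℝ × ℝ → (Fin 3 → ℝ) := fun p => ![p.1, p.2, 0]
    let Z : Set (Fin 3 → ℝ) := {y | 0 < y 0 ∧ y 0 < 1 ∧ y 1 = 0 ∧ y 2 = 0}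
    (∀ p : ℝ × ℝ, p ∈ Set.Ioo (0 : ℝ) 1 ×ˢ ({0} : Set ℝ) →
        delta F Set.univ p Z = 1 ∧
        delta (fun x : ℝ => F (x, p.2)) Set.univ p.1 Z = 2) ∧
    (∀ p : ℝ × ℝ, p ∉ Set.Ioo (0 : ℝ) 1 ×ˢ ({0} : Set ℝ) →
        delta F Set.univ p Z = 0 ∧
        delta (fun x : ℝ => F (x, p.2)) Set.univ p.1 Z = 0) ∧
    {p : ℝ × ℝ | delta (fun x : ℝ => F (x, p.2)) Set.univ p.1 Z =
        delta F Set.univ p Z ∧ 0 < delta F Set.univ p Z} = ∅ ∧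
    (∀ p : ℝ × ℝ, delta (fun x : ℝ => F (x, p.2)) Set.univ p.1 Z = 0 ∨
        delta F Set.univ p Z < delta (fun x : ℝ => F (x, p.2)) Set.univ p.1 Z) ∧
    deltaSup F Set.univ Z = 1 ∧
    {p : ℝ × ℝ | delta F Set.univ p Z = deltaSup F Set.univ Z} =
      Set.Ioo (0 : ℝ) 1 ×ˢ ({0} : Set ℝ) ∧
    ¬ IsClosed {p : ℝ × ℝ | delta F Set.univ p Z = deltaSup F Set.univ Z} := by
  intro F Z
  have hin : ∀ p : ℝ × ℝ, p ∈ Set.Ioo (0 : ℝ) 1 ×ˢ ({0} : Set ℝ) →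
      delta F Set.univ p Z = 1 ∧ delta (fun x : ℝ => F (x, p.2)) Set.univ p.1 Z = 2 :=
    fun p hp => ⟨bk_deltaF_in hp, bk_deltaSlice_in hp⟩
  have hout : ∀ p : ℝ × ℝ, p ∉ Set.Ioo (0 : ℝ) 1 ×ˢ ({0} : Set ℝ) →
      delta F Set.univ p Z = 0 ∧ delta (fun x : ℝ => F (x, p.2)) Set.univ p.1 Z = 0 :=
    fun p hp => ⟨bk_deltaF_out hp, bk_deltaSlice_out hp⟩
  have hds : deltaSup F Set.univ Z = 1 := bk_deltaSup_F
  have hS : {p : ℝ × ℝ | delta F Set.univ p Z = deltaSup F Set.univ Z} =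
      Set.Ioo (0 : ℝ) 1 ×ˢ ({0} : Set ℝ) := by
    ext p
    simp only [Set.mem_setOf_eq, hds]
    constructor
    · intro h
      by_contra hp
      have := (hout p hp).1
      omega
    · intro hp
      exact (hin p hp).1
  refine ⟨hin, hout, ?_, ?_, hds, hS, ?_⟩
  · ext p
    simp only [Set.mem_setOf_eq, Set.mem_empty_iff_false, iff_false]
    rintro ⟨heq, hpos⟩
    by_cases hp : p ∈ Set.Ioo (0 : ℝ) 1 ×ˢ ({0} : Set ℝ)
    · have h1 := (hin p hp).1
      have h2 := (hin p hp).2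
      omega
    · have h1 := (hout p hp).1
      omega
  · intro p
    by_cases hp : p ∈ Set.Ioo (0 : ℝ) 1 ×ˢ ({0} : Set ℝ)
    · right
      have h1 := (hin p hp).1
      have h2 := (hin p hp).2
      omega
    · left
      exact (hout p hp).2
  · rw [hS]
    exact bk_not_closed
end
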